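/- Let p be a prime, k ≥ 1 an integer, and a_1, ..., a_k integers with 1 ≤ a_1 ≤ a_2 ≤ ... ≤ a_k. If b is an integer with a_2 + ... + a_k ≤ b ≤ a_1 + a_2 + ... + a_k, then the number of subgroups of index p^b in ℤ/p^{a_1} × ℤ/p^{a_2} × ... × ℤ/p^{a_k} equals ∏_{i=2}^{k} (p^{a_1+...+a_k-b+i-1} - 1)/(p^{i-1} - 1). -/

import Mathlib

open Finset

/-- Recursive count of subgroups of order `p^c` in a product of `k` cyclic `p`-groups
each of order at least `p^c`. -/
def Ncount (p : ℕ) : ℕ → ℕ → ℕ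
  | 0, c => if c = 0 then 1 else 0
  | (k+1), c => ∑ j ∈ Finset.range (c+1), Ncount p k j * p ^ ((c - j) * k)

lemma Ncount_zero (p : ℕ) : ∀ k, Ncount p k 0 = 1
  | 0 => rfl
  | (k+1) => by simp [Ncount, Ncount_zero p k]

lemma Ncount_succ_succ (p k c : ℕ) :
    Ncount p (k+1) (c+1) = Ncount p k (c+1) + p ^ k * Ncount p (k+1) c := by
  rw [Ncount, Finset.sum_range_succ]
  have h1 : (c + 1 - (c+1)) * k = 0 := by simp
  rw [h1, pow_zero, mul_one, Ncount, Finset.mul_sum]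
  rw [add_comm]
  congr 1
  apply Finset.sum_congr rfl
  intro j hj
  simp only [Finset.mem_range] at hj
  have : (c + 1 - j) * k = k + (c - j) * k := by
    have : c + 1 - j = (c - j) + 1 := by omega
    rw [this]; ring
  rw [this, pow_add]
  ring

lemma Ncount_one (p c : ℕ) : Ncount p 1 c = 1 := by
  induction c with
  | zero => exact Ncount_zero p 1
  | succ c ih =>
      rw [Ncount_succ_succ]
      simp [Ncount, ih]

lemma pow_sub_one_ne_zero {p : ℕ} (hp : 2 ≤ p) {n : ℕ} (hn : 1 ≤ n) :
    ((p : ℚ) ^ n - 1) ≠ 0 := by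
  have h1 : (1:ℚ) < (p:ℚ) := by exact_mod_cast hp
  have : (1 : ℚ) < (p : ℚ) ^ n := one_lt_pow₀ h1 (by omega)
  linarith

lemma NQ {p : ℕ} (hp : 2 ≤ p) (k c : ℕ) :
    (Ncount p (k+1) c : ℚ) =
      ∏ i ∈ Finset.range k, (((p:ℚ) ^ (c + i + 1) - 1) / ((p:ℚ) ^ (i + 1) - 1)) := by
  induction k generalizing c with
  | zero => simp [Ncount_one]
  | succ k IH =>
      induction c with
      | zero =>
          rw [Ncount_zero]
          rw [eq_comm, Finset.prod_eq_one]
          · simp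
          intro i _
          have h0 : (0:ℕ) + i + 1 = i + 1 := by omega
          rw [h0, div_self (pow_sub_one_ne_zero hp (by omega))]
      | succ c IHc =>
          rw [Ncount_succ_succ, Nat.cast_add, Nat.cast_mul, IH (c+1), IHc]
          push_cast
          set A := ∏ i ∈ Finset.range k, ((p:ℚ) ^ (c + i + 2) - 1) with hA
          set D := ∏ i ∈ Finset.range k, ((p:ℚ) ^ (i + 1) - 1) with hD
          have hDne : D ≠ 0 := by
            rw [hD]
            exact Finset.prod_ne_zero_iff.2 fun i _ => pow_sub_one_ne_zero hp (by omega)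
          have hYne : ((p:ℚ) ^ (k+1) - 1) ≠ 0 := pow_sub_one_ne_zero hp (by omega)
          have e1 : ∏ i ∈ Finset.range (k+1), (((p:ℚ) ^ (c + 1 + i + 1) - 1) / ((p:ℚ) ^ (i + 1) - 1))
              = A * ((p:ℚ) ^ (c+k+2) - 1) / (D * ((p:ℚ) ^ (k+1) - 1)) := by
            rw [Finset.prod_div_distrib, Finset.prod_range_succ, Finset.prod_range_succ]
            congr 2
            · apply Finset.prod_congr rfl; intro i _; congr 2 <;> omega
            · congr 2; omega
          have e2 : ∏ i ∈ Finset.range k, (((p:ℚ) ^ (c + 1 + i + 1) - 1) / ((p:ℚ) ^ (i + 1) - 1))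
              = A / D := by
            rw [Finset.prod_div_distrib]
            congr 1
            apply Finset.prod_congr rfl; intro i _; congr 2 <;> omega
          have e3 : ∏ i ∈ Finset.range (k+1), (((p:ℚ) ^ (c + i + 1) - 1) / ((p:ℚ) ^ (i + 1) - 1))
              = A * ((p:ℚ) ^ (c+1) - 1) / (D * ((p:ℚ) ^ (k+1) - 1)) := by
            rw [Finset.prod_div_distrib]
            congr 1
            · rw [Finset.prod_range_succ']
              refine congrArg₂ (· * ·) ?_ rfl
              apply Finset.prod_congr rfl; intro i _; congr 2 <;> omega
            · rw [Finset.prod_range_succ]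
          rw [e1, e2, e3]
          have hX : (p:ℚ) ^ (c+k+2) - 1
              = ((p:ℚ) ^ (k+1) - 1) + (p:ℚ) ^ (k+1) * ((p:ℚ) ^ (c+1) - 1) := by
            have : (p:ℚ) ^ (c+k+2) = (p:ℚ) ^ (k+1) * (p:ℚ) ^ (c+1) := by
              rw [← pow_add]; congr 1; omega
            rw [this]; ring
          rw [hX]
          field_simp

open AddSubgroup

/-- Multiplication by `n` as an `AddMonoidHom`. -/
def smulHom (M : Type*) [AddCommMonoid M] (n : ℕ) : M →+ M where
  toFun x := n • x
  map_zero' := smul_zero n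
  map_add' a b := nsmul_add a b n

@[simp] lemma smulHom_apply {M : Type*} [AddCommMonoid M] (n : ℕ) (x : M) :
    smulHom M n x = n • x := rfl

lemma nat_card_sigma {ι : Type*} [Fintype ι] (f : ι → Type*) [∀ i, Finite (f i)] :
    Nat.card (Σ i, f i) = ∑ i, Nat.card (f i) := by
  have : ∀ i, Fintype (f i) := fun i => Fintype.ofFinite _
  classical
  simp only [Nat.card_eq_fintype_card, Fintype.card_sigma]

lemma card_eq_card_ker_mul_card_range {G H : Type*} [AddCommGroup G] [AddCommGroup H]
    (f : G →+ H) : Nat.card G = Nat.card f.ker * Nat.card f.range := by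
  rw [AddSubgroup.card_eq_card_quotient_mul_card_addSubgroup f.ker, mul_comm,
    Nat.card_congr (QuotientAddGroup.quotientKerEquivRange f).toEquiv]

noncomputable instance {G : Type*} [AddCommGroup G] [Finite G] : Finite (AddSubgroup G) :=
  Finite.of_injective (fun H => (H : Set G)) fun _ _ h => SetLike.coe_injective h

/-- Transfer the count of subgroups with a given property of cardinality along an `AddEquiv`. -/
lemma card_subgroup_eq_of_addEquiv {G G' : Type*} [AddCommGroup G] [AddCommGroup G']
    (e : G ≃+ G') (n : ℕ) :
    Nat.card {H : AddSubgroup G // Nat.card H = n}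
      = Nat.card {H' : AddSubgroup G' // Nat.card H' = n} := by
  have hcard : ∀ (H : AddSubgroup G), Nat.card (H.map e.toAddMonoidHom) = Nat.card H :=
    fun H => (Nat.card_congr (AddSubgroup.equivMapOfInjective H _ e.injective).toEquiv).symm
  have hcard' : ∀ (H : AddSubgroup G'), Nat.card (H.map e.symm.toAddMonoidHom) = Nat.card H :=
    fun H => (Nat.card_congr (AddSubgroup.equivMapOfInjective H _ e.symm.injective).toEquiv).symm
  have hmapmap : ∀ (H : AddSubgroup G), (H.map e.toAddMonoidHom).map e.symm.toAddMonoidHom = H := by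
    intro H
    ext x
    simp [AddSubgroup.mem_map]
  have hmapmap' : ∀ (H : AddSubgroup G'), (H.map e.symm.toAddMonoidHom).map e.toAddMonoidHom = H := by
    intro H
    ext x
    simp [AddSubgroup.mem_map]
  refine Nat.card_congr ⟨fun H => ⟨H.1.map e.toAddMonoidHom, by rw [hcard, H.2]⟩,
    fun H => ⟨H.1.map e.symm.toAddMonoidHom, by rw [hcard', H.2]⟩, ?_, ?_⟩
  · intro H; exact Subtype.ext (hmapmap H.1)
  · intro H; exact Subtype.ext (hmapmap' H.1)

section ZModLemmas

variable {p : ℕ}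

lemma zmod_gen_order (hp : p.Prime) {m a : ℕ} (hma : m ≤ a) :
    addOrderOf ((p ^ (a - m) : ℕ) : ZMod (p ^ a)) = p ^ m := by
  have hpa : (p ^ a) ≠ 0 := pow_ne_zero _ hp.ne_zero
  rw [ZMod.addOrderOf_coe _ hpa]
  have hd : p ^ (a - m) ∣ p ^ a := pow_dvd_pow p (by omega)
  rw [Nat.gcd_eq_right hd, Nat.pow_div (by omega) hp.pos]
  congr 1
  omega

lemma zmod_smul_eq_zero_iff (hp : p.Prime) {m a : ℕ} (hma : m ≤ a) (x : ZMod (p ^ a)) :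
    p ^ m • x = 0 ↔ x ∈ AddSubgroup.zmultiples ((p ^ (a - m) : ℕ) : ZMod (p ^ a)) := by
  haveI : NeZero (p ^ a) := ⟨pow_ne_zero _ hp.ne_zero⟩
  constructor
  · intro h
    have hx : ((x.val : ℕ) : ZMod (p ^ a)) = x := ZMod.natCast_rightInverse x
    have h2 : ((p ^ m * x.val : ℕ) : ZMod (p ^ a)) = 0 := by
      rw [Nat.cast_mul, ← nsmul_eq_mul, hx]
      exact_mod_cast h
    have h3 : p ^ a ∣ p ^ m * x.val := (ZMod.natCast_eq_zero_iff _ _).mp h2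
    have h4 : p ^ m * p ^ (a - m) ∣ p ^ m * x.val := by
      rw [← pow_add]
      have : m + (a - m) = a := by omega
      rw [this]
      exact h3
    have h5 : p ^ (a - m) ∣ x.val :=
      (Nat.mul_dvd_mul_iff_left (pow_pos hp.pos m)).mp h4
    obtain ⟨q, hq⟩ := h5
    refine ⟨(q : ℤ), ?_⟩
    have : x = ((p ^ (a - m) * q : ℕ) : ZMod (p ^ a)) := by rw [← hq, hx]
    rw [this]
    push_cast
    rw [zsmul_eq_mul]
    push_cast
    ring
  · rintro ⟨t, rfl⟩
    have hg : (p ^ m : ℕ) • ((p ^ (a - m) : ℕ) : ZMod (p ^ a)) = 0 := by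
      rw [nsmul_eq_mul]
      have : ((p ^ m : ℕ) : ZMod (p ^ a)) * ((p ^ (a - m) : ℕ) : ZMod (p ^ a))
          = ((p ^ m * p ^ (a - m) : ℕ) : ZMod (p ^ a)) := by push_cast; ring
      rw [this, ← pow_add]
      have : m + (a - m) = a := by omega
      rw [this, ZMod.natCast_self]
    calc p ^ m • t • ((p ^ (a - m) : ℕ) : ZMod (p ^ a))
        = t • (p ^ m • ((p ^ (a - m) : ℕ) : ZMod (p ^ a))) := smul_comm _ _ _
    _ = 0 := by rw [hg, smul_zero]

lemma zmod_card_torsion (hp : p.Prime) {m a : ℕ} (hma : m ≤ a) :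
    Nat.card {x : ZMod (p ^ a) // p ^ m • x = 0} = p ^ m := by
  rw [Nat.card_congr (Equiv.subtypeEquivRight (zmod_smul_eq_zero_iff hp hma))]
  rw [Nat.card_zmultiples, zmod_gen_order hp hma]

lemma zmod_subgroup_eq (hp : p.Prime) {m a : ℕ} (hma : m ≤ a)
    (S : AddSubgroup (ZMod (p ^ a))) (hS : Nat.card S = p ^ m) :
    S = AddSubgroup.zmultiples ((p ^ (a - m) : ℕ) : ZMod (p ^ a)) := by
  haveI : NeZero (p ^ a) := ⟨pow_ne_zero _ hp.ne_zero⟩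
  have hle : S ≤ AddSubgroup.zmultiples ((p ^ (a - m) : ℕ) : ZMod (p ^ a)) := by
    intro x hx
    have h1 : Nat.card S • (⟨x, hx⟩ : S) = 0 := card_nsmul_eq_zero'
    rw [hS] at h1
    have h2 : p ^ m • x = 0 := by
      have := congrArg (Subtype.val) h1
      simpa using this
    exact (zmod_smul_eq_zero_iff hp hma x).mp h2
  apply SetLike.coe_injective
  apply Set.eq_of_subset_of_ncard_le hle
  have e1 : (S : Set (ZMod (p ^ a))).ncard = p ^ m := by
    rw [← Nat.card_coe_set_eq]; exact hS
  have e2 : ((AddSubgroup.zmultiples ((p ^ (a - m) : ℕ) : ZMod (p ^ a)) : AddSubgroup (ZMod (p ^ a))) : Set (ZMod (p ^ a))).ncard = p ^ m := by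
    rw [← Nat.card_coe_set_eq]
    rw [show Nat.card ((AddSubgroup.zmultiples ((p ^ (a - m) : ℕ) : ZMod (p ^ a)) : AddSubgroup (ZMod (p ^ a))) : Set (ZMod (p ^ a))) = Nat.card (AddSubgroup.zmultiples ((p ^ (a - m) : ℕ) : ZMod (p ^ a))) from rfl]
    rw [Nat.card_zmultiples, zmod_gen_order hp hma]
  rw [e1, e2]

end ZModLemmas

section Goursat

variable {M C : Type*} [AddCommGroup M] [AddCommGroup C]

/-- The subgroup of `M × C` associated to a torsion element `y` of `M ⧸ H'`. -/
def gSub (H' : AddSubgroup M) (g : C) (y : M ⧸ H') : AddSubgroup (M × C) where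
  carrier := {zt | ∃ n : ℤ, zt.2 = n • g ∧ QuotientAddGroup.mk' H' zt.1 = n • y}
  zero_mem' := ⟨0, by simp, by simp⟩
  add_mem' := by
    rintro ⟨x1, t1⟩ ⟨x2, t2⟩ ⟨n1, h1, h1'⟩ ⟨n2, h2, h2'⟩
    refine ⟨n1 + n2, ?_, ?_⟩
    · show t1 + t2 = _
      rw [add_zsmul, ← h1, ← h2]
    · show QuotientAddGroup.mk' H' (x1 + x2) = _
      rw [map_add, add_zsmul, ← h1', ← h2']
  neg_mem' := by
    rintro ⟨x, t⟩ ⟨n, h, h'⟩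
    refine ⟨-n, ?_, ?_⟩
    · show -t = _
      rw [neg_zsmul, ← h]
    · show QuotientAddGroup.mk' H' (-x) = _
      rw [map_neg, neg_zsmul, ← h']

lemma mem_gSub {H' : AddSubgroup M} {g : C} {y : M ⧸ H'} {z : M × C} :
    z ∈ gSub H' g y ↔ ∃ n : ℤ, z.2 = n • g ∧ QuotientAddGroup.mk' H' z.1 = n • y := Iff.rfl

lemma zsmul_eq_zero_of_torsion {A : Type*} [AddCommGroup A] {d : ℕ} {y : A}
    (hy : d • y = 0) {n : ℤ} (hn : (d : ℤ) ∣ n) : n • y = 0 := by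
  obtain ⟨m, rfl⟩ := hn
  rw [mul_comm, mul_zsmul, natCast_zsmul, hy, smul_zero]

lemma gSub_comap (H' : AddSubgroup M) (g : C) {d : ℕ} (hd : addOrderOf g = d)
    (y : M ⧸ H') (hy : d • y = 0) :
    (gSub H' g y).comap (AddMonoidHom.inl M C) = H' := by
  ext x
  simp only [AddSubgroup.mem_comap, AddMonoidHom.inl_apply, mem_gSub]
  constructor
  · rintro ⟨n, hn, hn'⟩
    have hdvd : (d : ℤ) ∣ n := by
      rw [← hd]
      rw [addOrderOf_dvd_iff_zsmul_eq_zero]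
      exact hn.symm
    rw [zsmul_eq_zero_of_torsion hy hdvd] at hn'
    exact (QuotientAddGroup.eq_zero_iff x).mp hn'
  · intro hx
    exact ⟨0, by simp, by simp [(QuotientAddGroup.eq_zero_iff x).mpr hx]⟩

lemma gSub_map (H' : AddSubgroup M) (g : C) (y : M ⧸ H') :
    (gSub H' g y).map (AddMonoidHom.snd M C) = AddSubgroup.zmultiples g := by
  ext t
  simp only [AddSubgroup.mem_map, AddMonoidHom.coe_snd, mem_gSub,
    AddSubgroup.mem_zmultiples_iff]
  constructor
  · rintro ⟨⟨x, t'⟩, ⟨n, hn, hn'⟩, rfl⟩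
    exact ⟨n, hn.symm⟩
  · rintro ⟨n, rfl⟩
    obtain ⟨x, hx⟩ := QuotientAddGroup.mk'_surjective H' (n • y)
    exact ⟨(x, n • g), ⟨n, rfl, hx⟩, rfl⟩

lemma card_subgroup_prod (H : AddSubgroup (M × C)) :
    Nat.card H = Nat.card (H.comap (AddMonoidHom.inl M C))
      * Nat.card (H.map (AddMonoidHom.snd M C)) := by
  let ψ : H →+ C := (AddMonoidHom.snd M C).comp H.subtype
  rw [card_eq_card_ker_mul_card_range ψ]
  congr 1
  · apply Nat.card_congr
    refine ⟨fun x => ⟨x.1.1.1, ?_⟩, fun z => ⟨⟨(z.1, 0), z.2⟩, rfl⟩, ?_, ?_⟩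
    · have h0 : (x.1.1).2 = 0 := x.2
      have : ((x.1.1.1 : M), (0 : C)) = x.1.1 := Prod.ext rfl h0.symm
      show ((x.1.1.1 : M), (0 : C)) ∈ H
      rw [this]
      exact x.1.2
    · intro x
      apply Subtype.ext
      apply Subtype.ext
      have h0 : (x.1.1).2 = 0 := x.2
      exact Prod.ext rfl h0.symm
    · intro z
      rfl
  · have : ψ.range = H.map (AddMonoidHom.snd M C) := by
      show ((AddMonoidHom.snd M C).comp H.subtype).range = _
      rw [AddMonoidHom.range_comp, AddSubgroup.range_subtype]
    rw [this]

end Goursat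

section GoursatEquiv

variable {M C : Type*} [AddCommGroup M] [AddCommGroup C]

lemma exists_pair_gen {H : AddSubgroup (M × C)} {g : C}
    (h2 : H.map (AddMonoidHom.snd M C) = AddSubgroup.zmultiples g) :
    ∃ x : M, (x, g) ∈ H := by
  have hg : g ∈ H.map (AddMonoidHom.snd M C) := by
    rw [h2]; exact AddSubgroup.mem_zmultiples g
  obtain ⟨⟨z1, z2⟩, hz, hz2⟩ := hg
  have hz2' : z2 = g := hz2
  subst hz2'
  exact ⟨z1, hz⟩

/-- The Goursat-type bijection: subgroups of `M × C` with prescribed intersection with `M`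
and prescribed (cyclic) image in `C` correspond to torsion elements of `M ⧸ H'`. -/
noncomputable def goursatEquiv (H' : AddSubgroup M) (g : C) (d : ℕ) (hd : addOrderOf g = d) :
    {H : AddSubgroup (M × C) //
        H.comap (AddMonoidHom.inl M C) = H'
          ∧ H.map (AddMonoidHom.snd M C) = AddSubgroup.zmultiples g}
      ≃ {y : M ⧸ H' // d • y = 0} where
  toFun H := by
    refine ⟨QuotientAddGroup.mk' H' (Classical.choose (exists_pair_gen H.2.2)), ?_⟩
    have hx₀ : (Classical.choose (exists_pair_gen H.2.2), g) ∈ H.1 :=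
      Classical.choose_spec (exists_pair_gen H.2.2)
    set x₀ := Classical.choose (exists_pair_gen H.2.2)
    have h3 : d • ((x₀, g) : M × C) ∈ H.1 := AddSubgroup.nsmul_mem H.1 hx₀ d
    have h4 : d • ((x₀, g) : M × C) = (d • x₀, 0) := by
      have : d • g = 0 := by rw [← hd]; exact addOrderOf_nsmul_eq_zero g
      rw [Prod.smul_mk, this]
    rw [h4] at h3
    have h5 : d • x₀ ∈ H' := by
      rw [← H.2.1]
      exact h3
    rw [← map_nsmul]
    exact (QuotientAddGroup.eq_zero_iff _).mpr h5
  invFun y := ⟨gSub H' g y.1, gSub_comap H' g hd y.1 y.2, gSub_map H' g y.1⟩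
  left_inv := by
    rintro ⟨H, h1, h2⟩
    apply Subtype.ext
    show gSub H' g (QuotientAddGroup.mk' H' (Classical.choose (exists_pair_gen h2))) = H
    have hx₀ : (Classical.choose (exists_pair_gen h2), g) ∈ H :=
      Classical.choose_spec (exists_pair_gen h2)
    set x₀ := Classical.choose (exists_pair_gen h2) with hx₀def
    ext ⟨x, t⟩
    rw [mem_gSub]
    constructor
    · rintro ⟨n, hn, hn'⟩
      have hmem : x - n • x₀ ∈ H' := by
        have h6 : QuotientAddGroup.mk' H' (x - n • x₀) = 0 := by
          rw [map_sub, map_zsmul, sub_eq_zero]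
          exact hn'
        exact (QuotientAddGroup.eq_zero_iff _).mp h6
      have hmem2 : ((x - n • x₀ : M), (0 : C)) ∈ H := by
        rw [← h1] at hmem
        exact hmem
      have hmem3 : n • ((x₀, g) : M × C) ∈ H := AddSubgroup.zsmul_mem H hx₀ n
      have := AddSubgroup.add_mem H hmem2 hmem3
      have hn2 : t = n • g := hn
      have heq : ((x - n • x₀ : M), (0 : C)) + n • ((x₀, g) : M × C) = (x, t) := by
        rw [hn2, Prod.smul_mk, Prod.mk_add_mk]
        congr 1 <;> abel
      rwa [heq] at this
    · intro hxt
      have ht : t ∈ H.map (AddMonoidHom.snd M C) := ⟨(x, t), hxt, rfl⟩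
      rw [h2, AddSubgroup.mem_zmultiples_iff] at ht
      obtain ⟨n, hn⟩ := ht
      refine ⟨n, hn.symm, ?_⟩
      have hmem : ((x, t) : M × C) - n • ((x₀, g) : M × C) ∈ H :=
        AddSubgroup.sub_mem H hxt (AddSubgroup.zsmul_mem H hx₀ n)
      have hn2 : n • g = t := hn
      have heq : ((x, t) : M × C) - n • ((x₀, g) : M × C) = (x - n • x₀, 0) := by
        rw [Prod.smul_mk, Prod.mk_sub_mk, ← hn2, sub_self]
      rw [heq] at hmem
      have hmem2 : x - n • x₀ ∈ H' := by
        rw [← h1]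
        exact hmem
      show QuotientAddGroup.mk' H' x = n • QuotientAddGroup.mk' H' x₀
      rw [← map_zsmul, ← sub_eq_zero, ← map_sub]
      have h7 : QuotientAddGroup.mk' H' (x - n • x₀) = 0 :=
        (QuotientAddGroup.eq_zero_iff _).mpr hmem2
      exact h7
  right_inv := by
    rintro ⟨y, hy⟩
    apply Subtype.ext
    show QuotientAddGroup.mk' H' (Classical.choose (exists_pair_gen (gSub_map H' g y))) = y
    have hx₀ : (Classical.choose (exists_pair_gen (gSub_map H' g y)), g) ∈ gSub H' g y :=
      Classical.choose_spec (exists_pair_gen (gSub_map H' g y))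
    obtain ⟨n, hn, hn'⟩ := hx₀
    have hn2 : g = n • g := hn
    have hdvd : (d : ℤ) ∣ n - 1 := by
      rw [← hd, addOrderOf_dvd_iff_zsmul_eq_zero, sub_zsmul, one_zsmul, ← hn2]
      abel
    have : n • y = y := by
      have h0 : (n - 1) • y = 0 := zsmul_eq_zero_of_torsion hy hdvd
      calc n • y = (1 + (n - 1)) • y := by ring_nf
      _ = y + (n - 1) • y := by rw [add_zsmul, one_zsmul]
      _ = y := by rw [h0, add_zero]
    have hn'2 : QuotientAddGroup.mk' H'
        (Classical.choose (exists_pair_gen (gSub_map H' g y))) = n • y := hn'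
    rw [hn'2, this]

end GoursatEquiv

section TorsionCount

lemma card_torsion_quotient {M : Type*} [AddCommGroup M] [Finite M] (H' : AddSubgroup M) (d : ℕ)
    (hrange : H' ≤ (smulHom M d).range) :
    Nat.card {y : M ⧸ H' // d • y = 0} = Nat.card (smulHom M d).ker := by
  set K : AddSubgroup M := H'.comap (smulHom M d) with hK
  have hH'K : H' ≤ K := by
    intro x hx
    show d • x ∈ H'
    exact AddSubgroup.nsmul_mem H' hx d
  have hkerK : (smulHom M d).ker ≤ K := by
    intro x hx
    show d • x ∈ H'
    rw [show d • x = 0 from hx]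
    exact H'.zero_mem
  -- first homomorphism: K → M ⧸ H'
  set ψ : K →+ M ⧸ H' := (QuotientAddGroup.mk' H').comp K.subtype with hψ
  have hψker : Nat.card ψ.ker = Nat.card H' := by
    have : ψ.ker = H'.addSubgroupOf K := by
      ext x
      rw [AddMonoidHom.mem_ker, AddSubgroup.mem_addSubgroupOf]
      show QuotientAddGroup.mk' H' x.1 = 0 ↔ _
      exact QuotientAddGroup.eq_zero_iff _
    rw [this]
    exact Nat.card_congr (AddSubgroup.addSubgroupOfEquivOfLe hH'K).toEquiv
  have hψrange : Nat.card ψ.range = Nat.card {y : M ⧸ H' // d • y = 0} := by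
    apply Nat.card_congr
    apply Equiv.subtypeEquivRight
    intro y
    rw [AddMonoidHom.mem_range]
    constructor
    · rintro ⟨x, rfl⟩
      show d • (QuotientAddGroup.mk' H' x.1) = 0
      rw [← map_nsmul]
      exact (QuotientAddGroup.eq_zero_iff _).mpr x.2
    · intro hy
      obtain ⟨x, hx⟩ := QuotientAddGroup.mk'_surjective H' y
      have hmem : x ∈ K := by
        show d • x ∈ H'
        apply (QuotientAddGroup.eq_zero_iff _).mp
        show QuotientAddGroup.mk' H' (d • x) = 0
        rw [map_nsmul, hx, hy]
      exact ⟨⟨x, hmem⟩, hx⟩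
  -- second homomorphism: K → M
  set φ : K →+ M := (smulHom M d).comp K.subtype with hφ
  have hφker : Nat.card φ.ker = Nat.card (smulHom M d).ker := by
    have : φ.ker = ((smulHom M d).ker).addSubgroupOf K := by
      ext x
      rw [AddMonoidHom.mem_ker, AddSubgroup.mem_addSubgroupOf, AddMonoidHom.mem_ker]
      exact Iff.rfl
    rw [this]
    exact Nat.card_congr (AddSubgroup.addSubgroupOfEquivOfLe hkerK).toEquiv
  have hφrange : φ.range = H' := by
    ext x
    rw [AddMonoidHom.mem_range]
    constructor
    · rintro ⟨z, rfl⟩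
      exact z.2
    · intro hx
      obtain ⟨z, hz⟩ := hrange hx
      have hzK : z ∈ K := by
        show d • z ∈ H'
        rw [show d • z = x from hz]
        exact hx
      exact ⟨⟨z, hzK⟩, hz⟩
  have e1 := card_eq_card_ker_mul_card_range ψ
  have e2 := card_eq_card_ker_mul_card_range φ
  rw [hψker, hψrange] at e1
  rw [hφker, hφrange] at e2
  have hpos : 0 < Nat.card H' := Nat.card_pos
  have key : Nat.card H' * Nat.card {y : M ⧸ H' // d • y = 0}
      = Nat.card H' * Nat.card (smulHom M d).ker := by
    rw [← e1, e2]
    ring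
  exact Nat.eq_of_mul_eq_mul_left hpos key

end TorsionCount

section PiLemmas

variable {p : ℕ}

lemma card_ker_smul_pi (hp : p.Prime) {k : ℕ} (b : Fin k → ℕ) (m : ℕ) (hm : ∀ i, m ≤ b i) :
    Nat.card ((smulHom (∀ i, ZMod (p ^ b i)) (p ^ m)).ker) = p ^ (m * k) := by
  haveI : ∀ i, NeZero (p ^ b i) := fun i => ⟨pow_ne_zero _ hp.ne_zero⟩
  have e1 : ((smulHom (∀ i, ZMod (p ^ b i)) (p ^ m)).ker : Type _)
      ≃ ∀ i, {x : ZMod (p ^ b i) // p ^ m • x = 0} := by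
    refine (Equiv.subtypeEquivRight ?_).trans (Equiv.subtypePiEquivPi)
    intro x
    show p ^ m • x = 0 ↔ _
    rw [funext_iff]
    apply forall_congr'
    intro i
    rw [Pi.smul_apply, Pi.zero_apply]
  rw [Nat.card_congr e1, Nat.card_pi]
  have : ∀ i : Fin k, Nat.card {x : ZMod (p ^ b i) // p ^ m • x = 0} = p ^ m :=
    fun i => zmod_card_torsion hp (hm i)
  rw [Finset.prod_congr rfl (fun i _ => this i), Finset.prod_const, Finset.card_univ,
    Fintype.card_fin, ← pow_mul]

lemma subgroup_le_range_smul (hp : p.Prime) {k : ℕ} (b : Fin k → ℕ) {c j : ℕ} (hj : j ≤ c)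
    (hc : ∀ i, c ≤ b i) (H' : AddSubgroup (∀ i, ZMod (p ^ b i))) (hH' : Nat.card H' = p ^ j) :
    H' ≤ (smulHom (∀ i, ZMod (p ^ b i)) (p ^ (c - j))).range := by
  haveI : ∀ i, NeZero (p ^ b i) := fun i => ⟨pow_ne_zero _ hp.ne_zero⟩
  intro x hx
  have h1 : p ^ j • x = 0 := by
    have h0 : Nat.card H' • (⟨x, hx⟩ : H') = 0 := card_nsmul_eq_zero'
    rw [hH'] at h0
    have := congrArg (Subtype.val) h0
    simpa using this
  have h2 : ∀ i, ∃ z : ZMod (p ^ b i), p ^ (c - j) • z = x i := by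
    intro i
    have hci := hc i
    have hxi : p ^ j • x i = 0 := by
      have := congrFun h1 i
      rwa [Pi.smul_apply, Pi.zero_apply] at this
    have hmem := (zmod_smul_eq_zero_iff hp (le_trans hj (hc i)) (x i)).mp hxi
    rw [AddSubgroup.mem_zmultiples_iff] at hmem
    obtain ⟨t, ht⟩ := hmem
    refine ⟨t • ((p ^ (b i - c) : ℕ) : ZMod (p ^ b i)), ?_⟩
    rw [smul_comm]
    rw [← ht]
    congr 1
    rw [← Nat.cast_smul_eq_nsmul (ZMod (p ^ b i)), smul_eq_mul]
    push_cast
    rw [← pow_add]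
    congr 2
    omega
  choose z hz using h2
  refine ⟨z, ?_⟩
  show p ^ (c - j) • z = x
  funext i
  rw [Pi.smul_apply]
  exact hz i

end PiLemmas

section StepCount

variable {p : ℕ}

lemma fiber_card (hp : p.Prime) {k : ℕ} (b : Fin k → ℕ) (a₀ c j : ℕ)
    (hc : ∀ i, c ≤ b i) (hca : c ≤ a₀) (hj : j ≤ c)
    (H' : AddSubgroup (∀ i, ZMod (p ^ b i))) (hH' : Nat.card H' = p ^ j) :
    Nat.card {H : AddSubgroup ((∀ i, ZMod (p ^ b i)) × ZMod (p ^ a₀)) //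
        Nat.card H = p ^ c ∧ H.comap (AddMonoidHom.inl _ _) = H'} = p ^ ((c - j) * k) := by
  haveI : ∀ i, NeZero (p ^ b i) := fun i => ⟨pow_ne_zero _ hp.ne_zero⟩
  haveI : NeZero (p ^ a₀) := ⟨pow_ne_zero _ hp.ne_zero⟩
  set M := ∀ i, ZMod (p ^ b i) with hM
  set C := ZMod (p ^ a₀) with hC
  set gC : C := ((p ^ (a₀ - (c - j)) : ℕ) : ZMod (p ^ a₀)) with hgC
  have hd : addOrderOf gC = p ^ (c - j) := zmod_gen_order hp (by omega)
  have e_iff : ∀ H : AddSubgroup (M × C),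
      (Nat.card H = p ^ c ∧ H.comap (AddMonoidHom.inl M C) = H')
        ↔ (H.comap (AddMonoidHom.inl M C) = H'
            ∧ H.map (AddMonoidHom.snd M C) = AddSubgroup.zmultiples gC) := by
    intro H
    constructor
    · rintro ⟨hcard, hcomap⟩
      have h1 : p ^ c = p ^ j * Nat.card (H.map (AddMonoidHom.snd M C)) := by
        rw [← hH', ← hcomap, ← hcard]
        exact card_subgroup_prod H
      have hmapcard : Nat.card (H.map (AddMonoidHom.snd M C)) = p ^ (c - j) := by
        have hpj : 0 < p ^ j := pow_pos hp.pos j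
        have h2 : p ^ j * p ^ (c - j) = p ^ j * Nat.card (H.map (AddMonoidHom.snd M C)) := by
          rw [← pow_add, show j + (c - j) = c from by omega]
          exact h1
        exact (Nat.eq_of_mul_eq_mul_left hpj h2).symm
      exact ⟨hcomap, zmod_subgroup_eq hp (show c - j ≤ a₀ from by omega) _ hmapcard⟩
    · rintro ⟨hcomap, hmap⟩
      refine ⟨?_, hcomap⟩
      rw [card_subgroup_prod H, hcomap, hH', hmap, Nat.card_zmultiples, hd, ← pow_add]
      congr 1
      omega
  rw [Nat.card_congr (Equiv.subtypeEquivRight e_iff)]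
  rw [Nat.card_congr (goursatEquiv H' gC (p ^ (c - j)) hd)]
  rw [card_torsion_quotient H' _ (subgroup_le_range_smul hp b hj hc H' hH')]
  exact card_ker_smul_pi hp b (c - j) (fun i => by have := hc i; omega)

lemma step_count (hp : p.Prime) {k : ℕ} (b : Fin k → ℕ) (a₀ c : ℕ)
    (hc : ∀ i, c ≤ b i) (hca : c ≤ a₀) :
    Nat.card {H : AddSubgroup ((∀ i, ZMod (p ^ b i)) × ZMod (p ^ a₀)) //
        Nat.card H = p ^ c}
      = ∑ j ∈ Finset.range (c + 1),
          Nat.card {H' : AddSubgroup (∀ i, ZMod (p ^ b i)) // Nat.card H' = p ^ j}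
            * p ^ ((c - j) * k) := by
  haveI : ∀ i, NeZero (p ^ b i) := fun i => ⟨pow_ne_zero _ hp.ne_zero⟩
  haveI : NeZero (p ^ a₀) := ⟨pow_ne_zero _ hp.ne_zero⟩
  set M := ∀ i, ZMod (p ^ b i) with hM
  set C := ZMod (p ^ a₀) with hC
  set S := {H : AddSubgroup (M × C) // Nat.card H = p ^ c} with hS
  -- the invariant j
  have hdvd : ∀ H : S, Nat.card (H.1.comap (AddMonoidHom.inl M C)) ∣ p ^ c := by
    intro H
    refine ⟨Nat.card (H.1.map (AddMonoidHom.snd M C)), ?_⟩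
    have h := card_subgroup_prod H.1
    rw [H.2] at h
    exact h
  have hj_exists : ∀ H : S, ∃ j ≤ c,
      Nat.card (H.1.comap (AddMonoidHom.inl M C)) = p ^ j :=
    fun H => (Nat.dvd_prime_pow hp).mp (hdvd H)
  set jOf : S → Fin (c + 1) := fun H =>
    ⟨(Nat.card (H.1.comap (AddMonoidHom.inl M C))).factorization p, by
      obtain ⟨j, hj, hcard⟩ := hj_exists H
      rw [hcard, hp.factorization_pow, Finsupp.single_eq_same]
      omega⟩ with hjOf
  have hjOf_spec : ∀ H : S,
      Nat.card (H.1.comap (AddMonoidHom.inl M C)) = p ^ (jOf H : ℕ) := by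
    intro H
    obtain ⟨j, hj, hcard⟩ := hj_exists H
    rw [hcard]
    congr 1
    rw [hjOf]
    simp only [hcard, hp.factorization_pow, Finsupp.single_eq_same]
  -- partition according to jOf
  rw [← Nat.card_congr (Equiv.sigmaFiberEquiv jOf), nat_card_sigma,
    ← Fin.sum_univ_eq_sum_range (fun j => Nat.card
      {H' : AddSubgroup M // Nat.card H' = p ^ j} * p ^ ((c - j) * k)) (c + 1)]
  apply Finset.sum_congr rfl
  intro j _
  have hjc : (j : ℕ) ≤ c := by omega
  -- fiber over j ≃ pairs (H', H)
  have e2 : {H : S // jOf H = j}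
      ≃ {H : AddSubgroup (M × C) //
          Nat.card H = p ^ c ∧ Nat.card (H.comap (AddMonoidHom.inl M C)) = p ^ (j : ℕ)} := by
    refine (Equiv.subtypeSubtypeEquivSubtypeExists _ _).trans (Equiv.subtypeEquivRight ?_)
    intro H
    constructor
    · rintro ⟨h1, h2⟩
      refine ⟨h1, ?_⟩
      have hspec := hjOf_spec ⟨H, h1⟩
      rw [show jOf ⟨H, h1⟩ = j from h2] at hspec
      exact hspec
    · rintro ⟨h1, h2⟩
      refine ⟨h1, ?_⟩
      have hspec := hjOf_spec ⟨H, h1⟩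
      rw [h2] at hspec
      have hval : (jOf ⟨H, h1⟩ : ℕ) = (j : ℕ) :=
        Nat.pow_right_injective hp.two_le hspec.symm
      exact Fin.ext hval
  rw [Nat.card_congr e2]
  -- now fibre over H'
  set T := {H' : AddSubgroup M // Nat.card H' = p ^ (j : ℕ)} with hT
  haveI : Fintype T := Fintype.ofFinite T
  set D := {H : AddSubgroup (M × C) //
      Nat.card H = p ^ c ∧ Nat.card (H.comap (AddMonoidHom.inl M C)) = p ^ (j : ℕ)} with hD
  set f : D → T := fun H => ⟨H.1.comap (AddMonoidHom.inl M C), H.2.2⟩ with hf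
  have e3 : D ≃ Σ H' : T, {H : AddSubgroup (M × C) //
      Nat.card H = p ^ c ∧ H.comap (AddMonoidHom.inl M C) = H'.1} := by
    refine (Equiv.sigmaFiberEquiv f).symm.trans (Equiv.sigmaCongrRight ?_)
    intro H'
    refine (Equiv.subtypeSubtypeEquivSubtypeExists _ _).trans (Equiv.subtypeEquivRight ?_)
    intro H
    constructor
    · rintro ⟨⟨hc1, hc2⟩, hc3⟩
      exact ⟨hc1, congrArg Subtype.val hc3⟩
    · rintro ⟨hc1, hc3⟩
      refine ⟨⟨hc1, ?_⟩, Subtype.ext hc3⟩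
      rw [hc3]
      exact H'.2
  rw [Nat.card_congr e3, nat_card_sigma]
  have hfib : ∀ H' : T, Nat.card {H : AddSubgroup (M × C) //
      Nat.card H = p ^ c ∧ H.comap (AddMonoidHom.inl M C) = H'.1}
        = p ^ ((c - (j : ℕ)) * k) :=
    fun H' => fiber_card hp b a₀ c j hc hca hjc H'.1 H'.2
  rw [Finset.sum_congr rfl (fun H' _ => hfib H'), Finset.sum_const, Finset.card_univ,
    smul_eq_mul, Nat.card_eq_fintype_card]

end StepCount

section MainCount

variable {p : ℕ}

lemma Ncount_succ_eq (p k c : ℕ) :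
    Ncount p (k+1) c
      = ∑ j ∈ Finset.range (c + 1), Ncount p k j * p ^ ((c - j) * k) := rfl

lemma count_subgroups (hp : p.Prime) (k : ℕ) :
    ∀ (a : Fin k → ℕ) (c : ℕ), (∀ i, c ≤ a i) →
      Nat.card {H : AddSubgroup (∀ i, ZMod (p ^ a i)) // Nat.card H = p ^ c}
        = Ncount p k c := by
  induction k with
  | zero =>
      intro a c _
      haveI : Unique (∀ i : Fin 0, ZMod (p ^ a i)) :=
        ⟨⟨fun i => i.elim0⟩, fun x => funext fun i => i.elim0⟩
      have hcard1 : ∀ H : AddSubgroup (∀ i : Fin 0, ZMod (p ^ a i)), Nat.card H = 1 := by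
        intro H
        rw [Nat.card_eq_one_iff_unique]
        exact ⟨⟨fun x y => Subtype.ext (Subsingleton.elim _ _)⟩, ⟨0⟩⟩
      by_cases hc0 : c = 0
      · subst hc0
        rw [Ncount_zero]
        rw [Nat.card_eq_one_iff_unique]
        constructor
        · constructor
          intro H K
          apply Subtype.ext
          ext x
          have hx : x = 0 := Subsingleton.elim x 0
          subst hx
          exact iff_of_true (AddSubgroup.zero_mem _) (AddSubgroup.zero_mem _)
        · exact ⟨⊥, by rw [hcard1 ⊥, pow_zero]⟩
      · have hne : p ^ c ≠ 1 := by
          have : 1 < p ^ c := Nat.one_lt_pow hc0 hp.one_lt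
          omega
        haveI : IsEmpty {H : AddSubgroup (∀ i : Fin 0, ZMod (p ^ a i)) //
            Nat.card H = p ^ c} := by
          constructor
          rintro ⟨H, hH⟩
          rw [hcard1 H] at hH
          exact hne hH.symm
        rw [Nat.card_of_isEmpty]
        simp [Ncount, hc0]
  | succ k IH =>
      intro a c hc
      haveI : ∀ i : Fin (k+1), NeZero (p ^ a i) := fun i => ⟨pow_ne_zero _ hp.ne_zero⟩
      let e : (∀ i : Fin (k+1), ZMod (p ^ a i))
          ≃+ ((∀ i : Fin k, ZMod (p ^ a i.succ)) × ZMod (p ^ a 0)) :=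
        { toFun := fun x => (fun i => x i.succ, x 0)
          invFun := fun y => Fin.cons y.2 y.1
          left_inv := fun x => Fin.cons_self_tail x
          right_inv := fun y => by
            refine Prod.ext (funext fun i => ?_) ?_ <;> simp
          map_add' := fun x y => rfl }
      rw [card_subgroup_eq_of_addEquiv e (p ^ c)]
      rw [step_count hp (fun i => a i.succ) (a 0) c (fun i => hc i.succ) (hc 0)]
      rw [Ncount_succ_eq]
      apply Finset.sum_congr rfl
      intro j hj
      rw [Finset.mem_range] at hj
      rw [IH (fun i => a i.succ) j (fun i => le_trans (by omega) (hc i.succ))]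

end MainCount

/-- Rank `k`, case `a₂ + ⋯ + a_k ≤ b ≤ a₁ + ⋯ + a_k`: the number of subgroups of index
`p^b` in `ℤ/p^{a₁} × ⋯ × ℤ/p^{a_k}` is `∏_{i=2}^k (p^{a₁+⋯+a_k-b+i-1}-1)/(p^{i-1}-1)`. -/
theorem rankk_lastcase (p k : ℕ) (hp : p.Prime) (hk : 1 ≤ k)
    (a : Fin k → ℕ) (ha : ∀ i, 1 ≤ a i) (hmono : Monotone a)
    (b : ℕ) (hb1 : (∑ i, a i) - a ⟨0, hk⟩ ≤ b) (hb2 : b ≤ ∑ i, a i) :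
    (Nat.card {H : AddSubgroup (∀ i : Fin k, ZMod (p ^ a i)) //
        H.index = p ^ b} : ℚ) =
      ∏ i ∈ Finset.Icc 2 k,
        (((p : ℚ) ^ ((∑ j, a j) - b + i - 1) - 1) / ((p : ℚ) ^ (i - 1) - 1)) := by
  haveI : ∀ i : Fin k, NeZero (p ^ a i) := fun i => ⟨pow_ne_zero _ hp.ne_zero⟩
  set S := ∑ i, a i with hSdef
  set c := S - b with hcdef
  have ha0S : a ⟨0, hk⟩ ≤ S :=
    Finset.single_le_sum (f := a) (fun i _ => Nat.zero_le _) (Finset.mem_univ _)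
  have hc : ∀ i, c ≤ a i := by
    intro i
    have h0le : a ⟨0, hk⟩ ≤ a i := hmono (by simp [Fin.le_def])
    omega
  have hG : Nat.card (∀ i : Fin k, ZMod (p ^ a i)) = p ^ S := by
    rw [Nat.card_pi]
    rw [Finset.prod_congr rfl (fun i _ => Nat.card_zmod (p ^ a i))]
    exact Finset.prod_pow_eq_pow_sum _ _ _
  have key : ∀ H : AddSubgroup (∀ i : Fin k, ZMod (p ^ a i)),
      H.index = p ^ b ↔ Nat.card H = p ^ c := by
    intro H
    have hmul := AddSubgroup.index_mul_card H
    rw [hG] at hmul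
    constructor
    · intro h
      rw [h] at hmul
      have h2 : p ^ b * Nat.card H = p ^ b * p ^ c := by
        rw [hmul, ← pow_add]
        congr 1
        omega
      exact Nat.eq_of_mul_eq_mul_left (pow_pos hp.pos b) h2
    · intro h
      rw [h] at hmul
      have h2 : H.index * p ^ c = p ^ b * p ^ c := by
        rw [hmul, ← pow_add]
        congr 1
        omega
      exact Nat.eq_of_mul_eq_mul_right (pow_pos hp.pos c) h2
  rw [Nat.card_congr (Equiv.subtypeEquivRight key)]
  rw [count_subgroups hp k a c hc]
  obtain ⟨k', rfl⟩ : ∃ k', k = k' + 1 := ⟨k - 1, by omega⟩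
  rw [NQ hp.two_le k' c]
  have himg : Finset.Icc 2 (k' + 1) = (Finset.range k').image (fun i => i + 2) := by
    ext x
    simp only [Finset.mem_Icc, Finset.mem_image, Finset.mem_range]
    constructor
    · intro hx
      exact ⟨x - 2, by omega, by omega⟩
    · rintro ⟨y, hy, rfl⟩
      omega
  rw [himg, Finset.prod_image (by intro x _ y _ h; simp only at h; omega)]
  apply Finset.prod_congr rfl
  intro i _
  congr 2 <;> omega
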